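/- Fix p ∈ (0,1) and let I(x) = I_{p²}(x) if x < p², I(x) = 0 if p² ≤ x ≤ p(2-p), and I(x) = I_{p(2-p)}(x) if x > p(2-p). Every point y ∈ (0, p²) is an exposed point of I: there exists λ ∈ ℝ such that λy - I(y) > λx - I(x) for all x ≠ y. In fact λ = ln(y(1-p²)/((1-y)p²)) works. -/

import Mathlib

open Real

noncomputable def rateI (t : ℝ) (x : ℝ) : EReal :=
  if x ∈ Set.Icc (0 : ℝ) 1 then
    ((x * Real.log (x / t) + (1 - x) * Real.log ((1 - x) / (1 - t)) : ℝ) : EReal)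
  else ⊤

noncomputable def Ifun (p : ℝ) (x : ℝ) : EReal :=
  if x < p ^ 2 then rateI (p ^ 2) x
  else if x ≤ p * (2 - p) then 0
  else rateI (p * (2 - p)) x

lemma kl_pos {y x : ℝ} (hy0 : 0 < y) (hy1 : y < 1) (hx : x ∈ Set.Icc (0:ℝ) 1)
    (hxy : x ≠ y) :
    0 < x * Real.log (x / y) + (1 - x) * Real.log ((1 - x) / (1 - y)) := by
  obtain ⟨hx0, hx1⟩ := hx
  rcases eq_or_lt_of_le hx0 with h0 | h0
  · subst h0
    simp only [zero_div, Real.log_zero, mul_zero, zero_mul, sub_zero, zero_add, one_mul]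
    have : (1:ℝ) < 1 / (1 - y) := by
      rw [lt_div_iff₀ (by linarith)]; linarith
    have := Real.log_pos this
    linarith
  rcases eq_or_lt_of_le hx1 with h1 | h1
  · subst h1
    simp only [sub_self, zero_div, Real.log_zero, mul_zero, zero_mul, add_zero, one_mul]
    have : (1:ℝ) < 1 / y := by rw [lt_div_iff₀ hy0]; linarith
    have := Real.log_pos this
    linarith
  · have hA : Real.log (y / x) < y / x - 1 :=
      Real.log_lt_sub_one_of_pos (div_pos hy0 h0) (by
        intro h
        apply hxy
        field_simp at h
        linarith)
    have hB : Real.log ((1 - y) / (1 - x)) < (1 - y) / (1 - x) - 1 :=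
      Real.log_lt_sub_one_of_pos (div_pos (by linarith) (by linarith)) (by
        intro h
        apply hxy
        have h1x : (1:ℝ) - x ≠ 0 := by linarith
        field_simp at h
        linarith)
    have e1 : Real.log (x / y) = - Real.log (y / x) := by
      rw [← Real.log_inv, inv_div]
    have e2 : Real.log ((1 - x) / (1 - y)) = - Real.log ((1 - y) / (1 - x)) := by
      rw [← Real.log_inv, inv_div]
    have m1 : x * Real.log (y / x) < x * (y / x - 1) :=
      mul_lt_mul_of_pos_left hA h0
    have m2 : (1 - x) * Real.log ((1 - y) / (1 - x)) < (1 - x) * ((1 - y) / (1 - x) - 1) :=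
      mul_lt_mul_of_pos_left hB (by linarith)
    have c1 : x * (y / x - 1) = y - x := by field_simp
    have c2 : (1 - x) * ((1 - y) / (1 - x) - 1) = x - y := by
      have : (1:ℝ) - x ≠ 0 := by linarith
      field_simp; ring
    rw [e1, e2]
    nlinarith [m1, m2]

lemma key_id {t y x : ℝ} (ht0 : 0 < t) (ht1 : t < 1) (hy0 : 0 < y) (hy1 : y < 1)
    (hx : x ∈ Set.Icc (0:ℝ) 1) :
    x * Real.log (x / t) + (1 - x) * Real.log ((1 - x) / (1 - t))
      - Real.log (y * (1 - t) / ((1 - y) * t)) * x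
    = (x * Real.log (x / y) + (1 - x) * Real.log ((1 - x) / (1 - y)))
      + (y * Real.log (y / t) + (1 - y) * Real.log ((1 - y) / (1 - t))
         - Real.log (y * (1 - t) / ((1 - y) * t)) * y) := by
  obtain ⟨hx0, hx1⟩ := hx
  have ht0' : t ≠ 0 := ne_of_gt ht0
  have ht1' : (1:ℝ) - t ≠ 0 := by linarith
  have hy0' : y ≠ 0 := ne_of_gt hy0
  have hy1' : (1:ℝ) - y ≠ 0 := by linarith
  have hlam : Real.log (y * (1 - t) / ((1 - y) * t))
      = Real.log y + Real.log (1 - t) - Real.log (1 - y) - Real.log t := by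
    rw [Real.log_div (by positivity) (by positivity), Real.log_mul hy0' ht1',
      Real.log_mul hy1' ht0']
    ring
  have hyt : Real.log (y / t) = Real.log y - Real.log t := Real.log_div hy0' ht0'
  have hyt' : Real.log ((1 - y) / (1 - t)) = Real.log (1 - y) - Real.log (1 - t) :=
    Real.log_div hy1' ht1'
  rcases eq_or_lt_of_le hx0 with h0 | h0
  · subst h0
    simp only [zero_div, Real.log_zero, mul_zero, zero_mul, sub_zero, zero_add, one_mul,
      mul_zero]
    rw [Real.log_div one_ne_zero ht1', Real.log_div one_ne_zero hy1', hlam, hyt, hyt']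
    ring
  rcases eq_or_lt_of_le hx1 with h1 | h1
  · subst h1
    simp only [sub_self, zero_div, Real.log_zero, mul_zero, zero_mul, add_zero, one_mul,
      mul_one]
    rw [Real.log_div one_ne_zero ht0', Real.log_div one_ne_zero hy0', hlam, hyt, hyt']
    ring
  · have hx0' : x ≠ 0 := ne_of_gt h0
    have hx1' : (1:ℝ) - x ≠ 0 := by linarith
    rw [Real.log_div hx0' ht0', Real.log_div hx1' ht1', Real.log_div hx0' hy0',
      Real.log_div hx1' hy1', hlam, hyt, hyt']
    ring

theorem stmt_12 (p : ℝ) (hp : p ∈ Set.Ioo (0 : ℝ) 1) (y : ℝ)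
    (hy : y ∈ Set.Ioo (0 : ℝ) (p ^ 2)) :
    ∀ x : ℝ, x ≠ y →
      ((((Real.log (y * (1 - p ^ 2) / ((1 - y) * p ^ 2))) * x : ℝ) : EReal) - Ifun p x <
        (((Real.log (y * (1 - p ^ 2) / ((1 - y) * p ^ 2))) * y : ℝ) : EReal) - Ifun p y) := by
  obtain ⟨hp0, hp1⟩ := hp
  obtain ⟨hy0, hyp⟩ := hy
  set t : ℝ := p ^ 2 with ht_def
  set s : ℝ := p * (2 - p) with hs_def
  have ht0 : 0 < t := by positivity
  have ht1 : t < 1 := by nlinarith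
  have hts : t < s := by nlinarith
  have hs1 : s < 1 := by nlinarith
  have hs0 : 0 < s := by nlinarith
  have hy1 : y < 1 := lt_trans hyp ht1
  set lam : ℝ := Real.log (y * (1 - t) / ((1 - y) * t)) with hlam_def
  have hlam_neg : lam < 0 := by
    apply Real.log_neg
    · exact div_pos (mul_pos hy0 (by linarith)) (mul_pos (by linarith) ht0)
    · rw [div_lt_one (mul_pos (by linarith) ht0)]
      nlinarith
  -- value of I at y
  set Iy : ℝ := y * Real.log (y / t) + (1 - y) * Real.log ((1 - y) / (1 - t)) with hIy_def
  have hymem : y ∈ Set.Icc (0:ℝ) 1 := ⟨le_of_lt hy0, le_of_lt hy1⟩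
  have hIfy : Ifun p y = ((Iy : ℝ) : EReal) := by
    rw [Ifun, if_pos hyp, rateI, if_pos hymem]
  -- key bound at x = t
  have hkey_t : lam * t < lam * y - Iy := by
    have hid := key_id ht0 ht1 hy0 hy1 (Set.mem_Icc.mpr ⟨le_of_lt ht0, le_of_lt ht1⟩) (x := t)
    have hkl := kl_pos hy0 hy1 (Set.mem_Icc.mpr ⟨le_of_lt ht0, le_of_lt ht1⟩)
      (ne_of_gt hyp)
    have hzero : t * Real.log (t / t) + (1 - t) * Real.log ((1 - t) / (1 - t)) = 0 := by
      rw [div_self (ne_of_gt ht0), div_self (by linarith : (1:ℝ) - t ≠ 0), Real.log_one]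
      ring
    rw [hzero, ← hlam_def, ← hIy_def] at hid
    clear_value t lam Iy
    linarith
  clear_value t s lam Iy
  intro x hxy
  rw [hIfy]
  rw [show ((lam * y : ℝ) : EReal) - ((Iy : ℝ) : EReal) = ((lam * y - Iy : ℝ) : EReal) by
    rw [EReal.coe_sub]]
  by_cases hxI : x ∈ Set.Icc (0:ℝ) 1
  · rcases lt_or_ge x t with hxt | hxt
    · -- region 1
      rw [Ifun, ← ht_def, ← hs_def, if_pos hxt, rateI, if_pos hxI]
      set Ix : ℝ := x * Real.log (x / t) + (1 - x) * Real.log ((1 - x) / (1 - t)) with hIx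
      rw [show ((lam * x : ℝ) : EReal) - ((Ix : ℝ) : EReal) = ((lam * x - Ix : ℝ) : EReal) by
        rw [EReal.coe_sub]]
      rw [EReal.coe_lt_coe_iff]
      have hid := key_id ht0 ht1 hy0 hy1 hxI (x := x)
      rw [← hlam_def, ← hIy_def, ← hIx] at hid
      clear_value Ix
      have hkl := kl_pos hy0 hy1 hxI hxy
      linarith
    · rcases le_or_gt x s with hxs | hxs
      · -- region 2
        rw [Ifun, ← ht_def, ← hs_def, if_neg (not_lt.mpr hxt), if_pos hxs, sub_zero]
        rw [EReal.coe_lt_coe_iff]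
        have : lam * x ≤ lam * t := by nlinarith
        linarith
      · -- region 3
        rw [Ifun, ← ht_def, ← hs_def, if_neg (not_lt.mpr hxt), if_neg (not_le.mpr hxs), rateI, if_pos hxI]
        set Ix : ℝ := x * Real.log (x / s) + (1 - x) * Real.log ((1 - x) / (1 - s)) with hIx
        rw [show ((lam * x : ℝ) : EReal) - ((Ix : ℝ) : EReal) = ((lam * x - Ix : ℝ) : EReal) by
          rw [EReal.coe_sub]]
        rw [EReal.coe_lt_coe_iff]
        clear_value Ix
        have hkl : 0 < Ix := by rw [hIx]; exact kl_pos hs0 hs1 hxI (ne_of_gt hxs)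
        have : lam * x < lam * t := by nlinarith
        linarith
  · -- x outside [0,1]
    have htop : Ifun p x = ⊤ := by
      rw [Ifun, ← ht_def, ← hs_def]
      rcases lt_or_ge x t with hxt | hxt
      · rw [if_pos hxt, rateI, if_neg hxI]
      · rcases le_or_gt x s with hxs | hxs
        · exact absurd (Set.mem_Icc.mpr ⟨le_trans (le_of_lt ht0) hxt,
            le_trans hxs (le_of_lt hs1)⟩) hxI
        · rw [if_neg (not_lt.mpr hxt), if_neg (not_le.mpr hxs), rateI, if_neg hxI]
    rw [htop, show ((lam * x : ℝ) : EReal) - ⊤ = ⊥ by simp]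
    exact EReal.bot_lt_coe _
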